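/- Let G be a topological group. If every group homomorphism from G to Homeo([0,1]^ℕ) (with the compact-open topology) is continuous, then every group homomorphism from G to any separable topological group is continuous. -/

import Mathlib

open Pointwise Set Topology

noncomputable instance homeoGroup (X : Type*) [TopologicalSpace X] : Group (X ≃ₜ X) where
  mul f g := g.trans f
  one := Homeomorph.refl X
  inv := Homeomorph.symm
  mul_assoc _ _ _ := rfl
  one_mul f := by ext x; rfl
  mul_one f := by ext x; rfl
  inv_mul_cancel f := by ext x; exact f.symm_apply_apply x

/-- The compact-open topology on the homeomorphism group of the Hilbert cube. -/
noncomputable def hilbertCubeHomeoTop :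
    TopologicalSpace ((ℕ → unitInterval) ≃ₜ (ℕ → unitInterval)) :=
  TopologicalSpace.induced
    (fun g : (ℕ → unitInterval) ≃ₜ (ℕ → unitInterval) =>
      (g : C(ℕ → unitInterval, ℕ → unitInterval)))
    ContinuousMap.compactOpen

namespace HilbUsp

noncomputable section

variable (d : ℕ → ℕ → ℝ)

structure GoodD : Prop where
  symm : ∀ i j, d i j = d j i
  self : ∀ i, d i i = 0
  tri : ∀ i j k, d i k ≤ d i j + d j k
  pos : ∀ i j, i ≠ j → 0 < d i j
  grom : ∀ i j k, i ≠ j → i ≠ k → j ≠ k → 0 < d i j + d i k - d j k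

theorem GoodD.nonneg {d} (hd : GoodD d) (i j : ℕ) : 0 ≤ d i j := by
  have h := hd.tri i j i
  rw [hd.self i, hd.symm j i] at h
  linarith

def lo (x : ℕ → ℝ) (N : ℕ) : ℕ → ℝ
  | 0 => 0
  | (k+1) => max (lo x N k) (x k - d N k)

def hi (x : ℕ → ℝ) (N : ℕ) : ℕ → ℝ
  | 0 => 1
  | (k+1) => min (hi x N k) (x k + d N k)

def gmin (N m : ℕ) : ℕ → ℝ
  | 0 => 1
  | (k+1) => min (gmin N m k) (if k = m then 1 else d N m + d N k - d m k)

def deltaA (N : ℕ) : ℕ → ℝ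
  | 0 => 1
  | (m+1) => min (deltaA N m) (min (d N m) (gmin d N m N))

def delta (N : ℕ) : ℝ := deltaA d N N

variable {d}

theorem gmin_pos (hd : GoodD d) {N m : ℕ} (hm : m ≠ N) (k : ℕ) (hk : k ≤ N) :
    0 < gmin d N m k := by
  induction k with
  | zero => norm_num [gmin]
  | succ k ih =>
    rw [gmin]
    refine lt_min (ih (le_of_lt (Nat.lt_of_succ_le hk))) ?_
    split_ifs with h
    · norm_num
    · exact hd.grom N m k (Ne.symm hm) (by omega) (Ne.symm h)

theorem deltaA_pos (hd : GoodD d) (N : ℕ) (m : ℕ) (hm : m ≤ N) : 0 < deltaA d N m := by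
  induction m with
  | zero => norm_num [deltaA]
  | succ m ih =>
    rw [deltaA]
    refine lt_min (ih (by omega)) (lt_min (hd.pos N m (by omega)) ?_)
    exact gmin_pos hd (by omega) N le_rfl

theorem delta_pos (hd : GoodD d) (N : ℕ) : 0 < delta d N := deltaA_pos hd N N le_rfl

theorem deltaA_anti (N : ℕ) {m m' : ℕ} (h : m ≤ m') : deltaA d N m' ≤ deltaA d N m := by
  induction m' with
  | zero => simp [Nat.le_zero.mp h]
  | succ m' ih =>
    rcases Nat.eq_or_lt_of_le h with rfl | h'
    · rfl
    · exact le_trans (min_le_left _ _) (ih (by omega))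

theorem gmin_anti (N m : ℕ) {k k' : ℕ} (h : k ≤ k') : gmin d N m k' ≤ gmin d N m k := by
  induction k' with
  | zero => simp [Nat.le_zero.mp h]
  | succ k' ih =>
    rcases Nat.eq_or_lt_of_le h with rfl | h'
    · rfl
    · exact le_trans (min_le_left _ _) (ih (by omega))

theorem delta_le_one (N : ℕ) : delta d N ≤ 1 := by
  have := deltaA_anti (d := d) N (Nat.zero_le N)
  simpa [deltaA, delta] using this

theorem delta_le_d {N m : ℕ} (hm : m < N) : delta d N ≤ d N m := by
  have h1 : delta d N ≤ deltaA d N (m+1) := deltaA_anti N (by omega)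
  refine h1.trans ?_
  rw [deltaA]
  exact le_trans (min_le_right _ _) (min_le_left _ _)

theorem delta_le_grom {N m k : ℕ} (hm : m < N) (hk : k < N) (hmk : k ≠ m) :
    delta d N ≤ d N m + d N k - d m k := by
  have h1 : delta d N ≤ deltaA d N (m+1) := deltaA_anti N (by omega)
  have h2 : deltaA d N (m+1) ≤ gmin d N m N := by
    rw [deltaA]; exact le_trans (min_le_right _ _) (min_le_right _ _)
  have h3 : gmin d N m N ≤ gmin d N m (k+1) := gmin_anti N m (by omega)
  have h4 : gmin d N m (k+1) ≤ d N m + d N k - d m k := by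
    rw [gmin]
    refine le_trans (min_le_right _ _) ?_
    simp [hmk]
  linarith

/-! ### lo/hi basic lemmas -/

section lohi

variable {x y : ℕ → ℝ} {N : ℕ}

theorem lo_nonneg (k : ℕ) : 0 ≤ lo d x N k := by
  induction k with
  | zero => simp [lo]
  | succ k ih => exact le_trans ih (le_max_left _ _)

theorem hi_le_one (k : ℕ) : hi d x N k ≤ 1 := by
  induction k with
  | zero => simp [hi]
  | succ k ih => exact le_trans (min_le_left _ _) ih

theorem lo_congr (k : ℕ) (h : ∀ m < k, x m = y m) : lo d x N k = lo d y N k := by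
  induction k with
  | zero => rfl
  | succ k ih => rw [lo, lo, ih (fun m hm => h m (by omega)), h k (by omega)]

theorem hi_congr (k : ℕ) (h : ∀ m < k, x m = y m) : hi d x N k = hi d y N k := by
  induction k with
  | zero => rfl
  | succ k ih => rw [hi, hi, ih (fun m hm => h m (by omega)), h k (by omega)]

theorem le_lo {m k : ℕ} (hm : m < k) : x m - d N m ≤ lo d x N k := by
  induction k with
  | zero => omega
  | succ k ih =>
    rcases Nat.lt_succ_iff_lt_or_eq.mp hm with h | rfl
    · exact le_trans (ih h) (le_max_left _ _)
    · exact le_max_right _ _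

theorem hi_le {m k : ℕ} (hm : m < k) : hi d x N k ≤ x m + d N m := by
  induction k with
  | zero => omega
  | succ k ih =>
    rcases Nat.lt_succ_iff_lt_or_eq.mp hm with h | rfl
    · exact le_trans (min_le_left _ _) (ih h)
    · exact min_le_right _ _

/-- the key uniform gap estimate -/
theorem gap (hd : GoodD d)
    (hx1 : ∀ i < N, 0 ≤ x i ∧ x i ≤ 1)
    (hx2 : ∀ i < N, ∀ j < N, |x i - x j| ≤ d i j) :
    ∀ k ≤ N, ∀ k' ≤ N, delta d N ≤ hi d x N k - lo d x N k' := by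
  have lemA : ∀ kk < N, ∀ k' ≤ N, delta d N ≤ (x kk + d N kk) - lo d x N k' := by
    intro kk hkk k' hk'
    induction k' with
    | zero =>
      have h0 : (0:ℝ) ≤ x kk := (hx1 kk hkk).1
      have := delta_le_d (d := d) hkk
      simp only [lo]; linarith
    | succ k' ih =>
      have ih' := ih (by omega)
      rw [lo]
      rw [le_sub_iff_add_le, add_comm, ← le_sub_iff_add_le, max_le_iff]
      constructor
      · linarith [ih']
      · by_cases hek : k' = kk
        · subst hek
          have := delta_le_d (d := d) hkk
          have := hd.nonneg N k'
          linarith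
        · have habs : |x kk - x k'| ≤ d kk k' := hx2 kk hkk k' (by omega)
          have hg : delta d N ≤ d N kk + d N k' - d kk k' :=
            delta_le_grom hkk (by omega) hek
          have : x kk - x k' ≥ -(d kk k') := by
            have := abs_le.mp habs; linarith [this.1]
          linarith
  have lemB0 : ∀ k' ≤ N, delta d N ≤ 1 - lo d x N k' := by
    intro k' hk'
    induction k' with
    | zero => simp only [lo]; linarith [delta_le_one (d := d) (N := N)]
    | succ k' ih =>
      have ih' := ih (by omega)
      rw [lo]
      rw [le_sub_iff_add_le, add_comm, ← le_sub_iff_add_le, max_le_iff]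
      constructor
      · linarith
      · have h1 : x k' ≤ 1 := (hx1 k' (by omega)).2
        have := delta_le_d (d := d) (show k' < N by omega)
        linarith
  intro k hk k' hk'
  induction k with
  | zero => exact lemB0 k' hk'
  | succ k ih =>
    rw [hi, le_sub_iff_add_le, le_min_iff]
    exact ⟨by linarith [ih (by omega)], by linarith [lemA k (by omega) k' hk']⟩

end lohi

/-! ### the parametrization of the Lipschitz body -/

variable (d) in
def gA (t : ℕ → ℝ) : ℕ → (ℕ → ℝ)
  | 0 => fun _ => 0
  | (N+1) => Function.update (gA t N) N
      (lo d (gA t N) N N + t N * (hi d (gA t N) N N - lo d (gA t N) N N))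

variable (d) in
def gfun (t : ℕ → ℝ) (N : ℕ) : ℝ := gA d t (N+1) N

theorem gA_agree (t : ℕ → ℝ) : ∀ M m, m < M → gA d t M m = gfun d t m := by
  intro M
  induction M with
  | zero => omega
  | succ M ih =>
    intro m hm
    rcases Nat.lt_succ_iff_lt_or_eq.mp hm with h | rfl
    · have hne : m ≠ M := by omega
      rw [show gA d t (M+1) m = gA d t M m by
        simp only [gA]; rw [Function.update_of_ne hne]]
      exact ih m h
    · rfl

theorem gstep (t : ℕ → ℝ) (N : ℕ) :
    gfun d t N = lo d (gfun d t) N N + t N * (hi d (gfun d t) N N - lo d (gfun d t) N N) := by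
  have h1 : lo d (gA d t N) N N = lo d (gfun d t) N N :=
    lo_congr N (fun m hm => gA_agree t N m hm)
  have h2 : hi d (gA d t N) N N = hi d (gfun d t) N N :=
    hi_congr N (fun m hm => gA_agree t N m hm)
  show gA d t (N+1) N = _
  simp only [gA]
  rw [Function.update_self, h1, h2]

theorem gfun_good (hd : GoodD d) (t : ℕ → ℝ) (ht : ∀ n, 0 ≤ t n ∧ t n ≤ 1) :
    ∀ N, (∀ i ≤ N, 0 ≤ gfun d t i ∧ gfun d t i ≤ 1) ∧
      (∀ i ≤ N, ∀ j ≤ N, |gfun d t i - gfun d t j| ≤ d i j) := by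
  intro N
  induction N with
  | zero =>
    have h0 : gfun d t 0 = t 0 := by
      rw [gstep]
      simp [lo, hi]
    constructor
    · intro i hi
      rw [Nat.le_zero.mp hi, h0]; exact ht 0
    · intro i hi j hj
      rw [Nat.le_zero.mp hi, Nat.le_zero.mp hj, h0]
      simp [hd.self 0]
  | succ N ih =>
    set g := gfun d t with hg
    have hx1 : ∀ i < N+1, 0 ≤ g i ∧ g i ≤ 1 := fun i hi => ih.1 i (by omega)
    have hx2 : ∀ i < N+1, ∀ j < N+1, |g i - g j| ≤ d i j :=
      fun i hi j hj => ih.2 i (by omega) j (by omega)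
    have hgap : delta d (N+1) ≤ hi d g (N+1) (N+1) - lo d g (N+1) (N+1) :=
      gap hd hx1 hx2 (N+1) le_rfl (N+1) le_rfl
    have hδ := delta_pos hd (N+1)
    have hmem : lo d g (N+1) (N+1) ≤ g (N+1) ∧ g (N+1) ≤ hi d g (N+1) (N+1) := by
      rw [hg, gstep, ← hg]
      have h1 := (ht (N+1)).1
      have h2 := (ht (N+1)).2
      constructor
      · nlinarith
      · nlinarith
    have hb : 0 ≤ g (N+1) ∧ g (N+1) ≤ 1 := by
      constructor
      · exact le_trans (lo_nonneg (N+1)) hmem.1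
      · exact le_trans hmem.2 (hi_le_one (N+1))
    have hpair : ∀ m < N+1, |g (N+1) - g m| ≤ d (N+1) m := by
      intro m hm
      rw [abs_le]
      constructor
      · have := le_lo (d := d) (x := g) (N := N+1) hm
        linarith [hmem.1]
      · have := hi_le (d := d) (x := g) (N := N+1) hm
        linarith [hmem.2]
    constructor
    · intro i hi
      rcases Nat.lt_succ_iff_lt_or_eq.mp (Nat.lt_succ_of_le hi) with h | rfl
      · exact ih.1 i (by omega)
      · exact hb
    · intro i hi j hj
      rcases Nat.lt_succ_iff_lt_or_eq.mp (Nat.lt_succ_of_le hi) with h1 | rfl <;>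
        rcases Nat.lt_succ_iff_lt_or_eq.mp (Nat.lt_succ_of_le hj) with h2 | rfl
      · exact hx2 i h1 j h2
      · rw [abs_sub_comm, hd.symm i (N+1)]
        exact hpair i h1
      · exact hpair j h2
      · simp [hd.self (N+1)]

/-! ### continuity of the parametrization -/

theorem cont_lo {A : Type*} [TopologicalSpace A] {X : A → ℕ → ℝ} {N : ℕ} (k : ℕ)
    (hX : ∀ m < k, Continuous fun a => X a m) :
    Continuous fun a => lo d (X a) N k := by
  induction k with
  | zero => simpa [lo] using continuous_const
  | succ k ih =>
    simp only [lo]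
    exact Continuous.max (ih (fun m hm => hX m (by omega)))
      ((hX k (by omega)).sub continuous_const)

theorem cont_hi {A : Type*} [TopologicalSpace A] {X : A → ℕ → ℝ} {N : ℕ} (k : ℕ)
    (hX : ∀ m < k, Continuous fun a => X a m) :
    Continuous fun a => hi d (X a) N k := by
  induction k with
  | zero => simpa [hi] using continuous_const
  | succ k ih =>
    simp only [hi]
    exact Continuous.min (ih (fun m hm => hX m (by omega)))
      ((hX k (by omega)).add continuous_const)

theorem cont_gfun : ∀ N, Continuous fun t : ℕ → unitInterval => gfun d (fun n => (t n : ℝ)) N := by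
  intro N
  induction N using Nat.strong_induction_on with
  | _ N ih =>
    have hrw : (fun t : ℕ → unitInterval => gfun d (fun n => (t n : ℝ)) N) =
        fun t : ℕ → unitInterval =>
          lo d (gfun d (fun n => (t n : ℝ))) N N +
            (t N : ℝ) * (hi d (gfun d (fun n => (t n : ℝ))) N N -
              lo d (gfun d (fun n => (t n : ℝ))) N N) := by
      funext t; exact gstep _ N
    rw [hrw]
    have hcoord : Continuous fun t : ℕ → unitInterval => (t N : ℝ) :=
      continuous_subtype_val.comp (continuous_apply N)
    have hl : Continuous fun t : ℕ → unitInterval => lo d (gfun d (fun n => (t n : ℝ))) N N :=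
      cont_lo N (fun m hm => ih m hm)
    have hh : Continuous fun t : ℕ → unitInterval => hi d (gfun d (fun n => (t n : ℝ))) N N :=
      cont_hi N (fun m hm => ih m hm)
    exact hl.add (hcoord.mul (hh.sub hl))

/-! ### inverse map and round trips -/

variable (d) in
def Tfun (x : ℕ → ℝ) (N : ℕ) : ℝ := (x N - lo d x N N) / (hi d x N N - lo d x N N)

theorem gap_of_good (hd : GoodD d) {x : ℕ → ℝ} (hb : ∀ i, 0 ≤ x i ∧ x i ≤ 1)
    (hp : ∀ i j, |x i - x j| ≤ d i j) (N : ℕ) :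
    delta d N ≤ hi d x N N - lo d x N N :=
  gap hd (fun i _ => hb i) (fun i _ j _ => hp i j) N le_rfl N le_rfl

theorem roundtrip1 (hd : GoodD d) (t : ℕ → ℝ) (ht : ∀ n, 0 ≤ t n ∧ t n ≤ 1) (N : ℕ) :
    Tfun d (gfun d t) N = t N := by
  have hgood := gfun_good hd t ht
  have hb : ∀ i, 0 ≤ gfun d t i ∧ gfun d t i ≤ 1 := fun i => (hgood i).1 i le_rfl
  have hp : ∀ i j, |gfun d t i - gfun d t j| ≤ d i j := by
    intro i j
    rcases le_total i j with h | h
    · exact (hgood j).2 i h j le_rfl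
    · exact (hgood i).2 i le_rfl j h
  have hden : hi d (gfun d t) N N - lo d (gfun d t) N N ≠ 0 := by
    have := gap_of_good hd hb hp N
    have := delta_pos hd N
    linarith
  rw [Tfun]
  rw [gstep t N]
  field_simp
  ring

theorem roundtrip2 (hd : GoodD d) (x : ℕ → ℝ) (hb : ∀ i, 0 ≤ x i ∧ x i ≤ 1)
    (hp : ∀ i j, |x i - x j| ≤ d i j) : ∀ N, gfun d (Tfun d x) N = x N := by
  intro N
  induction N using Nat.strong_induction_on with
  | _ N ih =>
    have hlo : lo d (gfun d (Tfun d x)) N N = lo d x N N := lo_congr N (fun m hm => ih m hm)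
    have hhi : hi d (gfun d (Tfun d x)) N N = hi d x N N := hi_congr N (fun m hm => ih m hm)
    have hden : hi d x N N - lo d x N N ≠ 0 := by
      have := gap_of_good hd hb hp N
      have := delta_pos hd N
      linarith
    rw [gstep (Tfun d x) N, hlo, hhi, Tfun]
    field_simp
    ring

theorem Tfun_mem (hd : GoodD d) (x : ℕ → ℝ) (hb : ∀ i, 0 ≤ x i ∧ x i ≤ 1)
    (hp : ∀ i j, |x i - x j| ≤ d i j) (N : ℕ) : 0 ≤ Tfun d x N ∧ Tfun d x N ≤ 1 := by
  have hgap := gap_of_good hd hb hp N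
  have hδ := delta_pos hd N
  have hden : 0 < hi d x N N - lo d x N N := by linarith
  have hlox : lo d x N N ≤ x N := by
    have h1 : ∀ k ≤ N, lo d x N k ≤ x N := by
      intro k hk
      induction k with
      | zero => exact (hb N).1
      | succ k ihk =>
        rw [lo, max_le_iff]
        refine ⟨ihk (by omega), ?_⟩
        have := (abs_le.mp (hp N k)).1
        linarith
    exact h1 N le_rfl
  have hxhi : x N ≤ hi d x N N := by
    have h1 : ∀ k ≤ N, x N ≤ hi d x N k := by
      intro k hk
      induction k with
      | zero => exact (hb N).2
      | succ k ihk =>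
        rw [hi, le_min_iff]
        refine ⟨ihk (by omega), ?_⟩
        have := (abs_le.mp (hp N k)).2
        linarith
    exact h1 N le_rfl
  constructor
  · exact div_nonneg (by linarith) (le_of_lt hden)
  · rw [Tfun, div_le_one hden]; linarith

/-! ### the Lipschitz body and its homeomorphism with the cube -/

variable (d) in
def Kset : Set (ℕ → unitInterval) :=
  {x | ∀ i j, |(x i : ℝ) - (x j : ℝ)| ≤ d i j}

theorem Kset_closed : IsClosed (Kset d) := by
  have : Kset d = ⋂ (i) (j),
      {x : ℕ → unitInterval | |(x i : ℝ) - (x j : ℝ)| ≤ d i j} := by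
    ext x; simp [Kset]
  rw [this]
  refine isClosed_iInter fun i => isClosed_iInter fun j => ?_
  have hc : Continuous fun x : ℕ → unitInterval => |(x i : ℝ) - (x j : ℝ)| :=
    ((continuous_subtype_val.comp (continuous_apply i)).sub
      (continuous_subtype_val.comp (continuous_apply j))).abs
  exact isClosed_le hc continuous_const

/-- the homeomorphism between the Hilbert cube and the Lipschitz body -/
def thetaHomeo (hd : GoodD d) : (ℕ → unitInterval) ≃ₜ (Kset d) := by
  have hmemg : ∀ t : ℕ → unitInterval, ∀ n, gfun d (fun i => (t i : ℝ)) n ∈ unitInterval := by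
    intro t n
    have := (gfun_good hd (fun i => (t i : ℝ)) (fun i => (t i).2) n).1 n le_rfl
    exact this
  have hmemK : ∀ t : ℕ → unitInterval,
      (fun n => (⟨gfun d (fun i => (t i : ℝ)) n, hmemg t n⟩ : unitInterval)) ∈ Kset d := by
    intro t i j
    rcases le_total i j with h | h
    · exact (gfun_good hd _ (fun i => (t i).2) j).2 i h j le_rfl
    · exact (gfun_good hd _ (fun i => (t i).2) i).2 i le_rfl j h
  have hbk : ∀ x : Kset d, ∀ i, 0 ≤ ((x : ℕ → unitInterval) i : ℝ) ∧
      ((x : ℕ → unitInterval) i : ℝ) ≤ 1 := fun x i => ⟨(((x : ℕ → unitInterval)) i).2.1,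
        (((x : ℕ → unitInterval)) i).2.2⟩
  refine Continuous.homeoOfEquivCompactToT2 (f := ⟨?_, ?_, ?_, ?_⟩) ?_
  · exact fun t => ⟨fun n => ⟨gfun d (fun i => (t i : ℝ)) n, hmemg t n⟩, hmemK t⟩
  · exact fun x => fun n => ⟨Tfun d (fun i => ((x : ℕ → unitInterval) i : ℝ)) n,
      Tfun_mem hd _ (hbk x) x.2 n⟩
  · intro t
    funext n
    apply Subtype.ext
    exact roundtrip1 hd _ (fun i => (t i).2) n
  · intro x
    apply Subtype.ext
    funext n
    apply Subtype.ext
    exact roundtrip2 hd _ (hbk x) x.2 n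
  · refine Continuous.subtype_mk (continuous_pi fun n => Continuous.subtype_mk ?_ _) _
    exact cont_gfun n

/-! ### McShane extension and the action on the Lipschitz body -/

section Action

variable {M : Type*} (ρ : M → M → ℝ) (p : ℕ → M)

structure GoodRho : Prop where
  symm : ∀ z w, ρ z w = ρ w z
  self : ∀ z, ρ z z = 0
  tri : ∀ z w u, ρ z u ≤ ρ z w + ρ w u
  le_one : ∀ z w, ρ z w ≤ 1
  dense : ∀ z : M, ∀ ε > (0:ℝ), ∃ n, ρ z (p n) < ε

variable {ρ p}

theorem GoodRho.nonneg (hρ : GoodRho ρ p) (z w : M) : 0 ≤ ρ z w := by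
  have h := hρ.tri z w z
  rw [hρ.self z, hρ.symm w z] at h
  linarith

variable (ρ p) in
def ddist (i j : ℕ) : ℝ := ρ (p i) (p j)

variable (ρ p) in
def Ext (g : ℕ → ℝ) (z : M) : ℝ := ⨅ j, (g j + ρ z (p j))

section ExtLemmas

variable (hρ : GoodRho ρ p) {g : ℕ → ℝ} {z w : M}

include hρ

theorem Ext_bdd (hg1 : ∀ j, 0 ≤ g j) (z : M) :
    BddBelow (Set.range fun j => g j + ρ z (p j)) := by
  refine ⟨0, ?_⟩
  rintro x ⟨j, rfl⟩
  exact add_nonneg (hg1 j) (hρ.nonneg z (p j))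

theorem Ext_le (hg1 : ∀ j, 0 ≤ g j) (j : ℕ) : Ext ρ p g z ≤ g j + ρ z (p j) :=
  ciInf_le (Ext_bdd hρ hg1 z) j

theorem Ext_nonneg (hg1 : ∀ j, 0 ≤ g j) : 0 ≤ Ext ρ p g z :=
  le_ciInf fun j => add_nonneg (hg1 j) (hρ.nonneg z (p j))

theorem Ext_le_one (hg1 : ∀ j, 0 ≤ g j) (hg1' : ∀ j, g j ≤ 1) : Ext ρ p g z ≤ 1 := by
  refine le_of_forall_pos_le_add fun ε hε => ?_
  obtain ⟨n, hn⟩ := hρ.dense z ε hε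
  calc Ext ρ p g z ≤ g n + ρ z (p n) := Ext_le hρ hg1 n
  _ ≤ 1 + ε := add_le_add (hg1' n) hn.le

theorem le_Ext (hg1 : ∀ j, 0 ≤ g j) (hg2 : ∀ i j, |g i - g j| ≤ ddist ρ p i j) (i : ℕ) :
    g i - ρ z (p i) ≤ Ext ρ p g z := by
  refine le_ciInf fun j => ?_
  have h1 : g i - g j ≤ ddist ρ p i j := (abs_le.mp (hg2 i j)).2
  have h2 : ddist ρ p i j ≤ ρ (p i) z + ρ z (p j) := hρ.tri _ _ _
  have h3 : ρ (p i) z = ρ z (p i) := hρ.symm _ _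
  rw [ddist] at h1 h2
  linarith

/-- unique Lipschitz extension: the inf-extension of the restriction of a Lipschitz
function recovers the function. -/
theorem Ext_eq_of_lip (F : M → ℝ) (hF : ∀ z w, |F z - F w| ≤ ρ z w) (z : M) :
    Ext ρ p (fun j => F (p j)) z = F z := by
  refine le_antisymm ?_ ?_
  · refine le_of_forall_pos_le_add fun ε hε => ?_
    have hε2 : (0:ℝ) < ε/2 := by linarith
    obtain ⟨n, hn⟩ := hρ.dense z (ε/2) hε2
    have h1 : Ext ρ p (fun j => F (p j)) z ≤ F (p n) + ρ z (p n) := by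
      refine ciInf_le ⟨F z - 1, ?_⟩ n
      rintro x ⟨j, rfl⟩
      show F z - 1 ≤ F (p j) + ρ z (p j)
      have := (abs_le.mp (hF z (p j))).2
      have := hρ.nonneg z (p j)
      linarith
    have h2 : F (p n) ≤ F z + ρ z (p n) := by
      have := (abs_le.mp (hF (p n) z)).2
      rw [hρ.symm z (p n)]
      linarith
    linarith
  · refine le_ciInf fun j => ?_
    have := (abs_le.mp (hF z (p j))).2
    linarith

end ExtLemmas

theorem Ext_lip (hρ : GoodRho ρ p) {g : ℕ → ℝ} (hg1 : ∀ j, 0 ≤ g j) (z w : M) :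
    |Ext ρ p g z - Ext ρ p g w| ≤ ρ z w := by
  have key : ∀ a b : M, Ext ρ p g a ≤ Ext ρ p g b + ρ a b := by
    intro a b
    have h1 : Ext ρ p g a - ρ a b ≤ Ext ρ p g b := by
      refine le_ciInf fun j => ?_
      have h2 : Ext ρ p g a ≤ g j + ρ a (p j) := Ext_le hρ hg1 j
      have h3 : ρ a (p j) ≤ ρ a b + ρ b (p j) := hρ.tri _ _ _
      linarith
    linarith
  rw [abs_le]
  have k1 := key z w
  have k2 := key w z
  rw [hρ.symm w z] at k2
  constructor <;> linarith

/-! the action of isometries on the Lipschitz body -/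

theorem mem_Kset_act (hρ : GoodRho ρ p) (φ : M → M)
    (hiso : ∀ z w, ρ (φ z) (φ w) = ρ z w) (x : Kset (ddist ρ p)) (i : ℕ) :
    Ext ρ p (fun j => ((x : ℕ → unitInterval) j : ℝ)) (φ (p i)) ∈ unitInterval := by
  constructor
  · exact Ext_nonneg hρ (fun j => ((x : ℕ → unitInterval) j).2.1)
  · exact Ext_le_one hρ (fun j => ((x : ℕ → unitInterval) j).2.1)
      (fun j => ((x : ℕ → unitInterval) j).2.2)

variable (ρ p) in
def act (hρ : GoodRho ρ p) (φ : M → M) (hiso : ∀ z w, ρ (φ z) (φ w) = ρ z w) :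
    Kset (ddist ρ p) → Kset (ddist ρ p) := fun x =>
  ⟨fun i => ⟨Ext ρ p (fun j => ((x : ℕ → unitInterval) j : ℝ)) (φ (p i)),
      mem_Kset_act hρ φ hiso x i⟩, by
    intro i j
    have hg1 : ∀ j, 0 ≤ ((x : ℕ → unitInterval) j : ℝ) :=
      fun j => ((x : ℕ → unitInterval) j).2.1
    have h := Ext_lip hρ hg1 (φ (p i)) (φ (p j))
    rw [hiso] at h
    exact h⟩

theorem act_apply (hρ : GoodRho ρ p) (φ : M → M) (hiso : ∀ z w, ρ (φ z) (φ w) = ρ z w)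
    (x : Kset (ddist ρ p)) (i : ℕ) :
    ((act ρ p hρ φ hiso x : ℕ → unitInterval) i : ℝ) =
      Ext ρ p (fun j => ((x : ℕ → unitInterval) j : ℝ)) (φ (p i)) := rfl

theorem act_congr (hρ : GoodRho ρ p) (φ ψ : M → M)
    (hφ : ∀ z w, ρ (φ z) (φ w) = ρ z w) (hψ : ∀ z w, ρ (ψ z) (ψ w) = ρ z w)
    (h : ∀ z, φ z = ψ z) (x : Kset (ddist ρ p)) :
    act ρ p hρ φ hφ x = act ρ p hρ ψ hψ x := by
  apply Subtype.ext
  funext i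
  apply Subtype.ext
  rw [act_apply, act_apply, h]

theorem act_id (hρ : GoodRho ρ p) (φ : M → M) (hiso : ∀ z w, ρ (φ z) (φ w) = ρ z w)
    (hid : ∀ z, φ z = z) (x : Kset (ddist ρ p)) : act ρ p hρ φ hiso x = x := by
  apply Subtype.ext
  funext i
  apply Subtype.ext
  rw [act_apply, hid]
  have hg2 : ∀ a b, |((x : ℕ → unitInterval) a : ℝ) - ((x : ℕ → unitInterval) b : ℝ)| ≤
      ddist ρ p a b := x.2
  have hg1 : ∀ j, 0 ≤ ((x : ℕ → unitInterval) j : ℝ) :=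
    fun j => ((x : ℕ → unitInterval) j).2.1
  refine le_antisymm ?_ ?_
  · have h := Ext_le hρ hg1 (z := p i) i
    rw [hρ.self (p i)] at h
    simpa using h
  · have h := le_Ext hρ hg1 hg2 (z := p i) i
    rw [hρ.self (p i)] at h
    simpa using h

theorem act_comp (hρ : GoodRho ρ p) (φ ψ : M → M)
    (hφ : ∀ z w, ρ (φ z) (φ w) = ρ z w) (hψ : ∀ z w, ρ (ψ z) (ψ w) = ρ z w)
    (x : Kset (ddist ρ p)) :
    act ρ p hρ φ hφ (act ρ p hρ ψ hψ x) =
      act ρ p hρ (fun z => ψ (φ z)) (fun z w => by rw [hψ, hφ]) x := by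
  apply Subtype.ext
  funext i
  apply Subtype.ext
  rw [act_apply, act_apply]
  have hg1 : ∀ j, 0 ≤ ((x : ℕ → unitInterval) j : ℝ) :=
    fun j => ((x : ℕ → unitInterval) j).2.1
  have hF : ∀ z w : M, |Ext ρ p (fun j => ((x : ℕ → unitInterval) j : ℝ)) (ψ z) -
      Ext ρ p (fun j => ((x : ℕ → unitInterval) j : ℝ)) (ψ w)| ≤ ρ z w := by
    intro z w
    have h := Ext_lip hρ hg1 (ψ z) (ψ w)
    rw [hψ] at h
    exact h
  have := Ext_eq_of_lip hρ
    (fun z => Ext ρ p (fun j => ((x : ℕ → unitInterval) j : ℝ)) (ψ z)) hF (φ (p i))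
  simpa [act_apply] using this

theorem act_continuous (hρ : GoodRho ρ p) (φ : M → M)
    (hiso : ∀ z w, ρ (φ z) (φ w) = ρ z w) : Continuous (act ρ p hρ φ hiso) := by
  refine continuous_induced_rng.mpr (continuous_pi fun i => ?_)
  refine continuous_induced_rng.mpr ?_
  rw [continuous_iff_continuousAt]
  intro x₀
  rw [ContinuousAt, Metric.tendsto_nhds]
  intro ε hε
  have hε3 : (0:ℝ) < ε/3 := by linarith
  obtain ⟨n, hn⟩ := hρ.dense (φ (p i)) (ε/3) hε3
  have hev : ∀ᶠ x : Kset (ddist ρ p) in nhds x₀,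
      |((x : ℕ → unitInterval) n : ℝ) - ((x₀ : ℕ → unitInterval) n : ℝ)| < ε/3 := by
    have hc : Continuous fun x : Kset (ddist ρ p) => ((x : ℕ → unitInterval) n : ℝ) :=
      continuous_subtype_val.comp ((continuous_apply n).comp continuous_subtype_val)
    have := (hc.tendsto x₀)
    rw [Metric.tendsto_nhds] at this
    simpa [Real.dist_eq] using this (ε/3) hε3
  refine hev.mono fun x hx => ?_
  have key : ∀ y : Kset (ddist ρ p),
      |Ext ρ p (fun j => ((y : ℕ → unitInterval) j : ℝ)) (φ (p i)) -
        ((y : ℕ → unitInterval) n : ℝ)| ≤ ε/3 := by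
    intro y
    have hg1 : ∀ j, 0 ≤ ((y : ℕ → unitInterval) j : ℝ) :=
      fun j => ((y : ℕ → unitInterval) j).2.1
    have hg2 : ∀ a b, |((y : ℕ → unitInterval) a : ℝ) - ((y : ℕ → unitInterval) b : ℝ)| ≤
        ddist ρ p a b := y.2
    rw [abs_le]
    constructor
    · have := le_Ext hρ hg1 hg2 (z := φ (p i)) n
      linarith
    · have := Ext_le hρ hg1 (z := φ (p i)) n
      linarith
  have k1 := key x
  have k2 := key x₀
  show dist (((act ρ p hρ φ hiso x : ℕ → unitInterval) i : ℝ))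
      (((act ρ p hρ φ hiso x₀ : ℕ → unitInterval) i : ℝ)) < ε
  rw [Real.dist_eq, act_apply, act_apply]
  calc |Ext ρ p (fun j => ((x : ℕ → unitInterval) j : ℝ)) (φ (p i)) -
      Ext ρ p (fun j => ((x₀ : ℕ → unitInterval) j : ℝ)) (φ (p i))| ≤
      |Ext ρ p (fun j => ((x : ℕ → unitInterval) j : ℝ)) (φ (p i)) -
        ((x : ℕ → unitInterval) n : ℝ)| +
      |((x : ℕ → unitInterval) n : ℝ) - ((x₀ : ℕ → unitInterval) n : ℝ)| +
      |((x₀ : ℕ → unitInterval) n : ℝ) -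
        Ext ρ p (fun j => ((x₀ : ℕ → unitInterval) j : ℝ)) (φ (p i))| := by
        have := abs_sub_le (Ext ρ p (fun j => ((x : ℕ → unitInterval) j : ℝ)) (φ (p i)))
          ((x : ℕ → unitInterval) n : ℝ)
          (Ext ρ p (fun j => ((x₀ : ℕ → unitInterval) j : ℝ)) (φ (p i)))
        have h2 := abs_sub_le ((x : ℕ → unitInterval) n : ℝ)
          ((x₀ : ℕ → unitInterval) n : ℝ)
          (Ext ρ p (fun j => ((x₀ : ℕ → unitInterval) j : ℝ)) (φ (p i)))
        linarith
  _ < ε := by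
      rw [abs_sub_comm] at k2
      linarith

end Action

/-! ### the chain pseudometric on a topological group -/

def wt (n : ℕ) : ℝ := (1/2)^n

theorem wt_pos (n : ℕ) : 0 < wt n := by rw [wt]; positivity

theorem wt_le_one (n : ℕ) : wt n ≤ 1 := by
  rw [wt]
  exact pow_le_one₀ (by norm_num) (by norm_num)

theorem wt_lt_wt {m n : ℕ} (h : wt m < wt n) : n < m := by
  by_contra hc
  push_neg at hc
  rcases Nat.eq_or_lt_of_le hc with rfl | h2
  · exact lt_irrefl _ h
  · have := pow_lt_pow_right_of_lt_one₀ (a := (1:ℝ)/2) (by norm_num) (by norm_num) h2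
    rw [wt, wt] at h
    linarith

theorem wt_half (n : ℕ) : wt (n+1) + wt (n+1) = wt n := by
  rw [wt, wt, pow_succ]
  ring

theorem wt_anti {m n : ℕ} (h : m ≤ n) : wt n ≤ wt m :=
  pow_le_pow_of_le_one (by norm_num) (by norm_num) h

section GroupChain

variable {H : Type*} [Group H] [TopologicalSpace H] [IsTopologicalGroup H]

theorem exists_cuberoot {W : Set H} (hW : W ∈ nhds (1:H)) :
    ∃ W' : Set H, IsOpen W' ∧ (1:H) ∈ W' ∧ W'⁻¹ = W' ∧ W' * W' * W' ⊆ W := by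
  obtain ⟨V₁, hV₁o, hV₁m, hV₁⟩ := exists_open_nhds_one_mul_subset hW
  obtain ⟨V₂, hV₂o, hV₂m, hV₂⟩ := exists_open_nhds_one_mul_subset (hV₁o.mem_nhds hV₁m)
  refine ⟨V₂ ∩ V₂⁻¹, hV₂o.inter hV₂o.inv, ⟨hV₂m, by simpa using hV₂m⟩, ?_, ?_⟩
  · simp [Set.inter_inv, Set.inter_comm]
  · have hsub : V₂ ∩ V₂⁻¹ ⊆ V₂ := Set.inter_subset_left
    have hV₂V₁ : V₂ ⊆ V₁ := fun a ha => by
      have : a * 1 ∈ V₂ * V₂ := Set.mul_mem_mul ha hV₂m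
      simpa using hV₂ this
    calc (V₂ ∩ V₂⁻¹) * (V₂ ∩ V₂⁻¹) * (V₂ ∩ V₂⁻¹)
        ⊆ V₂ * V₂ * V₂ := by
          exact Set.mul_subset_mul (Set.mul_subset_mul hsub hsub) hsub
    _ ⊆ V₁ * V₂ := Set.mul_subset_mul hV₂ (fun a ha => ha)
    _ ⊆ V₁ * V₁ := Set.mul_subset_mul (fun a ha => ha) hV₂V₁
    _ ⊆ W := hV₁

/-- a sequence of symmetric open neighborhoods with cube condition -/
theorem exists_Vseq {U : Set H} (hU : U ∈ nhds (1:H)) :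
    ∃ V : ℕ → Set H, V 0 = Set.univ ∧ (∀ n, (1:H) ∈ V n) ∧ (∀ n, (V n)⁻¹ = V n) ∧
      (∀ n, IsOpen (V n)) ∧ (∀ n, V (n+1) * V (n+1) * V (n+1) ⊆ V n) ∧ V 1 ⊆ U := by
  classical
  let S := {W : Set H // IsOpen W ∧ (1:H) ∈ W ∧ W⁻¹ = W}
  have step : ∀ s : S, ∃ s' : S, s'.1 * s'.1 * s'.1 ⊆ s.1 := by
    intro s
    obtain ⟨W', h1, h2, h3, h4⟩ := exists_cuberoot (s.2.1.mem_nhds s.2.2.1)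
    exact ⟨⟨W', h1, h2, h3⟩, h4⟩
  choose next hnext using step
  obtain ⟨W0, h1, h2, h3, h4⟩ := exists_cuberoot hU
  refine ⟨fun n => Nat.rec Set.univ (fun m _ => (next^[m] ⟨W0, h1, h2, h3⟩).1) n,
    rfl, ?_, ?_, ?_, ?_, ?_⟩
  · intro n
    cases n with
    | zero => trivial
    | succ m => exact (next^[m] ⟨W0, h1, h2, h3⟩).2.2.1
  · intro n
    cases n with
    | zero => simp
    | succ m => exact (next^[m] ⟨W0, h1, h2, h3⟩).2.2.2
  · intro n
    cases n with
    | zero => exact isOpen_univ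
    | succ m => exact (next^[m] ⟨W0, h1, h2, h3⟩).2.1
  · intro n
    cases n with
    | zero => exact fun a _ => trivial
    | succ m =>
      show (next^[m+1] ⟨W0, h1, h2, h3⟩).1 * (next^[m+1] ⟨W0, h1, h2, h3⟩).1 *
          (next^[m+1] ⟨W0, h1, h2, h3⟩).1 ⊆ (next^[m] ⟨W0, h1, h2, h3⟩).1
      rw [Function.iterate_succ_apply' next m ⟨W0, h1, h2, h3⟩]
      exact hnext _
  · show (next^[0] ⟨W0, h1, h2, h3⟩).1 ⊆ U
    intro a ha
    have : (1:H) * (1:H) * a ∈ W0 * W0 * W0 :=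
      Set.mul_mem_mul (Set.mul_mem_mul h2 h2) ha
    simpa using h4 this

variable (V : ℕ → Set H)

def wfun (a : H) : ℝ := sInf {r | ∃ n, a ∈ V n ∧ r = wt n}

def chains (x y : H) : Set ℝ :=
  {c | ∃ l : List H, l.prod * y = x ∧ c = (l.map (wfun V)).sum}

def Dd (x y : H) : ℝ := sInf (chains V x y)

variable {V}

structure VNice (W : ℕ → Set H) (U : Set H) : Prop where
  zero : W 0 = Set.univ
  one_mem : ∀ n, (1:H) ∈ W n
  symm : ∀ n, (W n)⁻¹ = W n
  isOpen : ∀ n, IsOpen (W n)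
  cube : ∀ n, W (n+1) * W (n+1) * W (n+1) ⊆ W n
  sub : W 1 ⊆ U

namespace VNice

variable {U : Set H} (hV : VNice V U)
include hV

theorem mono_succ (n : ℕ) : V (n+1) ⊆ V n := by
  intro a ha
  have : a * 1 * 1 ∈ V (n+1) * V (n+1) * V (n+1) :=
    Set.mul_mem_mul (Set.mul_mem_mul ha (hV.one_mem _)) (hV.one_mem _)
  simpa using hV.cube n this

theorem mono {m n : ℕ} (h : m ≤ n) : V n ⊆ V m := by
  induction n with
  | zero => rw [Nat.le_zero.mp h]
  | succ n ih =>
    rcases Nat.eq_or_lt_of_le h with rfl | h2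
    · exact fun a ha => ha
    · exact fun a ha => ih (by omega) (hV.mono_succ n ha)

/-- the core chain lemma -/
theorem chain_core : ∀ k : ℕ, ∀ l : List (H × ℕ), l.length ≤ k →
    (∀ q ∈ l, q.1 ∈ V q.2) → ∀ N : ℕ, ((l.map fun q => wt q.2).sum < wt N) →
    (l.map Prod.fst).prod ∈ V N := by
  intro k
  induction k with
  | zero =>
    intro l hlen _ N _
    rw [List.length_eq_zero_iff.mp (Nat.le_zero.mp hlen)]
    simpa using hV.one_mem N
  | succ k ih =>
    intro l hlen hmem N hsum
    by_cases hnil : l = []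
    · rw [hnil]; simpa using hV.one_mem N
    set s := (l.map fun q => wt q.2).sum with hs
    have hspos : 0 < s := by
      refine List.sum_pos _ (fun x hx => ?_) (by simpa using hnil)
      obtain ⟨q, _, rfl⟩ := List.mem_map.mp hx
      exact wt_pos q.2
    -- escalate N
    have hex : ∃ m, wt m ≤ s := by
      obtain ⟨m, hm⟩ := exists_pow_lt_of_lt_one hspos (show (1:ℝ)/2 < 1 by norm_num)
      exact ⟨m, le_of_lt hm⟩
    set M₀ := Nat.find hex with hM₀
    have hM₀spec : wt M₀ ≤ s := Nat.find_spec hex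
    have hM₀pos : 0 < M₀ := by
      rcases Nat.eq_zero_or_pos M₀ with h0 | h
      · exfalso
        have h1 : wt 0 ≤ s := h0 ▸ hM₀spec
        have h2 : wt 0 = 1 := by norm_num [wt]
        linarith [wt_le_one N, hsum]
      · exact h
    set N' := M₀ - 1 with hN'
    have hN'succ : N' + 1 = M₀ := by omega
    have hsltN' : s < wt N' := by
      by_contra hc
      push_neg at hc
      have : M₀ ≤ N' := Nat.find_le hc
      omega
    have hwtle : wt (N'+1) ≤ s := by rw [hN'succ]; exact hM₀spec
    have hNN' : N ≤ N' := by
      by_contra hc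
      push_neg at hc
      have h1 : wt N ≤ wt (N'+1) := wt_anti (by omega)
      linarith
    -- find the splitting point
    set P : ℕ → Prop := fun j => ((l.take j).map fun q => wt q.2).sum < wt (N'+1) with hP
    have hP0 : P 0 := by
      simp only [hP, List.take_zero, List.map_nil, List.sum_nil]
      exact wt_pos _
    set j := Nat.findGreatest P l.length with hj
    have hPj : P j := Nat.findGreatest_spec (Nat.zero_le _) hP0
    have hjle : j ≤ l.length := Nat.findGreatest_le _
    have hjlt : j < l.length := by
      rcases Nat.eq_or_lt_of_le hjle with he | h; swap; · exact h
      exfalso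
      have : P l.length → False := by
        intro hPl
        rw [hP] at hPl
        simp only [List.take_length] at hPl
        rw [← hs] at hPl
        linarith
      exact this (by rw [← he]; exact hPj)
    have hnPj1 : ¬ P (j+1) := by
      refine Nat.findGreatest_is_greatest (n := l.length) ?_ ?_
      · omega
      · omega
    -- split the list
    set l₁ := l.take j with hl₁
    set rest := l.drop j with hrest
    have hl₁len : l₁.length = j := by
      rw [hl₁, List.length_take]
      omega
    have hsplit : l₁ ++ rest = l := List.take_append_drop j l
    have hrestlen : rest.length = l.length - j := by rw [hrest, List.length_drop]
    obtain ⟨q, l₂, hql₂⟩ : ∃ q l₂, rest = q :: l₂ := by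
      cases hr : rest with
      | nil => exfalso; rw [hr] at hrestlen; simp at hrestlen; omega
      | cons q l₂ => exact ⟨q, l₂, rfl⟩
    have hleq : l = l₁ ++ q :: l₂ := by rw [← hsplit, hql₂]
    have hmem₁ : ∀ r ∈ l₁, r.1 ∈ V r.2 := fun r hr =>
      hmem r (by rw [hleq]; exact List.mem_append_left _ hr)
    have hmem₂ : ∀ r ∈ l₂, r.1 ∈ V r.2 := fun r hr =>
      hmem r (by rw [hleq]; exact List.mem_append_right _ (List.mem_cons_of_mem _ hr))
    have hmemq : q.1 ∈ V q.2 := hmem q (by rw [hleq]; exact List.mem_append_right _ List.mem_cons_self)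
    -- sums
    have hsum_expand : s = ((l₁.map fun r => wt r.2).sum + wt q.2) + (l₂.map fun r => wt r.2).sum := by
      rw [hs, hleq]
      simp [List.map_append, List.sum_append]
      ring
    have hsum₁ : (l₁.map fun r => wt r.2).sum < wt (N'+1) := hPj
    have htake1 : l.take (j+1) = l₁ ++ [q] := by
      rw [hleq, List.take_append]
      rw [List.take_of_length_le (by omega : l₁.length ≤ j+1)]
      rw [hl₁len, show j + 1 - j = 1 by omega]
      simp
    have hsum₁q : wt (N'+1) ≤ (l₁.map fun r => wt r.2).sum + wt q.2 := by
      by_contra hc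
      push_neg at hc
      refine hnPj1 ?_
      show ((l.take (j+1)).map fun q => wt q.2).sum < wt (N' + 1)
      rw [htake1]
      simp only [List.map_append, List.sum_append, List.map_cons, List.map_nil,
        List.sum_cons, List.sum_nil]
      linarith
    have hsum₂ : (l₂.map fun r => wt r.2).sum < wt (N'+1) := by
      have h2 := wt_half N'
      linarith [hsum_expand, hsltN', hsum₁q]
    -- apply induction
    have h₁ : (l₁.map Prod.fst).prod ∈ V (N'+1) := by
      refine ih l₁ (by omega) hmem₁ (N'+1) hsum₁
    have h₂ : (l₂.map Prod.fst).prod ∈ V (N'+1) := by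
      refine ih l₂ (by rw [hleq] at hlen; simp at hlen; omega) hmem₂ (N'+1) hsum₂
    have hq2 : q.1 ∈ V (N'+1) := by
      have hwtq : wt q.2 ≤ s := by
        rw [hsum_expand]
        have : 0 ≤ (l₁.map fun r => wt r.2).sum :=
          List.sum_nonneg (fun x hx => by
            obtain ⟨r, _, rfl⟩ := List.mem_map.mp hx; exact (wt_pos r.2).le)
        have : 0 ≤ (l₂.map fun r => wt r.2).sum :=
          List.sum_nonneg (fun x hx => by
            obtain ⟨r, _, rfl⟩ := List.mem_map.mp hx; exact (wt_pos r.2).le)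
        linarith
      have : wt q.2 < wt N' := lt_of_le_of_lt hwtq hsltN'
      have := wt_lt_wt this
      exact hV.mono (by omega) hmemq
    have hprod : (l.map Prod.fst).prod =
        (l₁.map Prod.fst).prod * q.1 * (l₂.map Prod.fst).prod := by
      rw [hleq]
      simp [List.map_append, List.prod_append]
      group
    rw [hprod]
    exact hV.mono hNN' (hV.cube N' (Set.mul_mem_mul (Set.mul_mem_mul h₁ hq2) h₂))

theorem wfun_nonempty (a : H) : {r | ∃ n, a ∈ V n ∧ r = wt n}.Nonempty :=
  ⟨wt 0, 0, by rw [hV.zero]; trivial, rfl⟩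

theorem wfun_bdd (a : H) : BddBelow {r | ∃ n, a ∈ V n ∧ r = wt n} := by
  refine ⟨0, ?_⟩
  rintro r ⟨n, _, rfl⟩
  exact (wt_pos n).le

omit hV in
theorem wfun_le {a : H} {n : ℕ} (h : a ∈ V n) : wfun V a ≤ wt n :=
  csInf_le (by
    refine ⟨0, ?_⟩
    rintro r ⟨m, _, rfl⟩
    exact (wt_pos m).le) ⟨n, h, rfl⟩

theorem wfun_nonneg (a : H) : 0 ≤ wfun V a :=
  le_csInf (hV.wfun_nonempty a) (by rintro r ⟨n, _, rfl⟩; exact (wt_pos n).le)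

theorem wfun_le_one (a : H) : wfun V a ≤ 1 := by
  have h : a ∈ V 0 := by rw [hV.zero]; trivial
  have := wfun_le h
  have : wt 0 = 1 := by norm_num [wt]
  linarith [wfun_le h]

theorem wfun_inv (a : H) : wfun V a⁻¹ = wfun V a := by
  have hiff : ∀ n, a⁻¹ ∈ V n ↔ a ∈ V n := by
    intro n
    conv_lhs => rw [← hV.symm n]
    exact Set.inv_mem_inv
  unfold wfun
  congr 1
  ext r
  constructor
  · rintro ⟨n, hn, rfl⟩; exact ⟨n, (hiff n).mp hn, rfl⟩
  · rintro ⟨n, hn, rfl⟩; exact ⟨n, (hiff n).mpr hn, rfl⟩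

theorem chains_nonempty (x y : H) : (chains V x y).Nonempty :=
  ⟨wfun V (x * y⁻¹), [x * y⁻¹], by simp, by simp⟩

theorem chains_bdd (x y : H) : BddBelow (chains V x y) := by
  refine ⟨0, ?_⟩
  rintro c ⟨l, hl, rfl⟩
  exact List.sum_nonneg (fun r hr => by
    obtain ⟨a, _, rfl⟩ := List.mem_map.mp hr
    exact hV.wfun_nonneg a)

theorem Dd_nonneg (x y : H) : 0 ≤ Dd V x y :=
  le_csInf (hV.chains_nonempty x y) (by
    rintro c ⟨l, hl, rfl⟩
    exact List.sum_nonneg (fun r hr => by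
      obtain ⟨a, _, rfl⟩ := List.mem_map.mp hr
      exact hV.wfun_nonneg a))

theorem Dd_le_wfun (x y : H) : Dd V x y ≤ wfun V (x * y⁻¹) := by
  have hmem : wfun V (x * y⁻¹) ∈ chains V x y := ⟨[x * y⁻¹], by simp, by simp⟩
  exact csInf_le (hV.chains_bdd x y) hmem

theorem Dd_le_one (x y : H) : Dd V x y ≤ 1 :=
  le_trans (hV.Dd_le_wfun x y) (hV.wfun_le_one _)

theorem Dd_self (x : H) : Dd V x x = 0 := by
  refine le_antisymm ?_ (hV.Dd_nonneg x x)
  have hmem : (0:ℝ) ∈ chains V x x := ⟨[], by simp, by simp⟩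
  exact csInf_le (hV.chains_bdd x x) hmem

theorem Dd_symm (x y : H) : Dd V x y = Dd V y x := by
  have key : ∀ a b : H, chains V a b ⊆ chains V b a := by
    rintro a b c ⟨l, hl, rfl⟩
    refine ⟨(l.map fun g => g⁻¹).reverse, ?_, ?_⟩
    · have hprod : ((l.map fun g => g⁻¹).reverse).prod = l.prod⁻¹ :=
        (List.prod_inv_reverse l).symm
      rw [hprod, ← hl]
      group
    · rw [List.map_reverse, List.sum_reverse, List.map_map]
      congr 1
      exact (List.map_congr_left (fun a _ => hV.wfun_inv a)).symm
  have hset : chains V x y = chains V y x := Set.Subset.antisymm (key x y) (key y x)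
  rw [Dd, Dd, hset]

theorem Dd_triangle (x y z : H) : Dd V x z ≤ Dd V x y + Dd V y z := by
  refine le_of_forall_pos_le_add fun ε hε => ?_
  have hε2 : (0:ℝ) < ε/2 := by linarith
  obtain ⟨c₁, hc₁m, hc₁⟩ := exists_lt_of_csInf_lt (hV.chains_nonempty x y)
    (show Dd V x y < Dd V x y + ε/2 by linarith)
  obtain ⟨c₂, hc₂m, hc₂⟩ := exists_lt_of_csInf_lt (hV.chains_nonempty y z)
    (show Dd V y z < Dd V y z + ε/2 by linarith)
  obtain ⟨l₁, hl₁, rfl⟩ := hc₁m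
  obtain ⟨l₂, hl₂, rfl⟩ := hc₂m
  have hmem : ((l₁ ++ l₂).map (wfun V)).sum ∈ chains V x z := by
    refine ⟨l₁ ++ l₂, ?_, rfl⟩
    rw [List.prod_append, mul_assoc, hl₂, hl₁]
  have := csInf_le (hV.chains_bdd x z) hmem
  rw [List.map_append, List.sum_append] at this
  calc Dd V x z ≤ (l₁.map (wfun V)).sum + (l₂.map (wfun V)).sum := this
  _ ≤ (Dd V x y + ε/2) + (Dd V y z + ε/2) := by linarith
  _ = Dd V x y + Dd V y z + ε := by ring

omit hV in
theorem Dd_right_invariant (x y h : H) : Dd V (x * h) (y * h) = Dd V x y := by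
  have key : ∀ l : List H, l.prod * (y * h) = x * h ↔ l.prod * y = x := by
    intro l
    constructor
    · intro hl
      have : l.prod * y * h = x * h := by rw [mul_assoc]; exact hl
      exact mul_right_cancel this
    · intro hl
      rw [← mul_assoc, hl]
  unfold Dd chains
  congr 1
  ext c
  simp only [Set.mem_setOf_eq]
  constructor
  · rintro ⟨l, hl, rfl⟩
    exact ⟨l, (key l).mp hl, rfl⟩
  · rintro ⟨l, hl, rfl⟩
    exact ⟨l, (key l).mpr hl, rfl⟩

theorem Dd_lower {x : H} (hx : x ∉ U) : wt 1 ≤ Dd V 1 x := by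
  by_contra hc
  push_neg at hc
  obtain ⟨c, hcm, hclt⟩ := exists_lt_of_csInf_lt (hV.chains_nonempty 1 x) hc
  obtain ⟨l, hl, rfl⟩ := hcm
  set s := (l.map (wfun V)).sum with hs
  set δ := (wt 1 - s) / (l.length + 1) with hδ
  have hδpos : 0 < δ := by
    rw [hδ]
    apply div_pos (by linarith) (by positivity)
  have hsel : ∀ a : H, ∃ n : ℕ, a ∈ V n ∧ wt n < wfun V a + δ := by
    intro a
    obtain ⟨r, hrm, hrlt⟩ := exists_lt_of_csInf_lt (hV.wfun_nonempty a)
      (show wfun V a < wfun V a + δ by linarith)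
    obtain ⟨n, hn, rfl⟩ := hrm
    exact ⟨n, hn, hrlt⟩
  choose nsel hnsel1 hnsel2 using hsel
  set lp := l.map fun a => (a, nsel a) with hlp
  have hmem : ∀ q ∈ lp, q.1 ∈ V q.2 := by
    rintro q hq
    obtain ⟨a, ha, rfl⟩ := List.mem_map.mp hq
    exact hnsel1 a
  have hsum : ((lp.map fun q => wt q.2).sum) < wt 1 := by
    have h1 : (lp.map fun q => wt q.2) = l.map fun a => wt (nsel a) := by
      rw [hlp, List.map_map]; rfl
    rw [h1]
    have h2 : (l.map fun a => wt (nsel a)).sum ≤ (l.map fun a => wfun V a + δ).sum :=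
      List.sum_le_sum (fun a _ => (hnsel2 a).le)
    have h3 : (l.map fun a => wfun V a + δ).sum = s + l.length * δ := by
      rw [hs]
      induction l with
      | nil => simp
      | cons a l ihl => simp [List.map_cons, List.sum_cons, ihl]; ring
    have h4 : s + l.length * δ < wt 1 := by
      have : (l.length : ℝ) * δ < (l.length + 1) * δ := by
        have : (0:ℝ) < δ := hδpos
        nlinarith
      have h5 : ((l.length : ℝ) + 1) * δ = wt 1 - s := by
        rw [hδ]
        field_simp
      linarith
    linarith
  have hprodfst : (lp.map Prod.fst).prod = l.prod := by
    rw [hlp, List.map_map]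
    have h9 : (Prod.fst ∘ fun a : H => (a, nsel a)) = id := rfl
    rw [h9, List.map_id]
  have hcore := hV.chain_core lp.length lp le_rfl hmem 1 hsum
  rw [hprodfst] at hcore
  have hxv : x = l.prod⁻¹ := by
    have h1 : l.prod * x = 1 := hl
    calc x = l.prod⁻¹ * (l.prod * x) := by group
    _ = l.prod⁻¹ := by rw [h1, mul_one]
  have : l.prod⁻¹ ∈ (V 1)⁻¹ := by simpa using hcore
  rw [hV.symm 1] at this
  rw [← hxv] at this
  exact hx (hV.sub this)

theorem Dd_close {x y : H} {n : ℕ} (h : x * y⁻¹ ∈ V n) : Dd V x y ≤ wt n :=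
  le_trans (hV.Dd_le_wfun x y) (wfun_le h)

end VNice

end GroupChain

/-! ### square root helpers -/

theorem sqrt_tri {a b c : ℝ} (ha : 0 ≤ a) (hb : 0 ≤ b) (hc : c ≤ a + b) :
    Real.sqrt c ≤ Real.sqrt a + Real.sqrt b := by
  have h1 : Real.sqrt c ≤ Real.sqrt (a + b) := Real.sqrt_le_sqrt hc
  have h2 : Real.sqrt (a + b) ≤ Real.sqrt a + Real.sqrt b := by
    rw [show Real.sqrt a + Real.sqrt b = Real.sqrt ((Real.sqrt a + Real.sqrt b)^2) by
      rw [Real.sqrt_sq (by positivity)]]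
    apply Real.sqrt_le_sqrt
    have h3 := Real.sq_sqrt ha
    have h4 := Real.sq_sqrt hb
    nlinarith [Real.sqrt_nonneg a, Real.sqrt_nonneg b]
  linarith

theorem sqrt_strict {a b c : ℝ} (ha : 0 < a) (hb : 0 < b) (hc : c ≤ a + b) :
    Real.sqrt c < Real.sqrt a + Real.sqrt b := by
  have h1 : Real.sqrt c ≤ Real.sqrt (a + b) := Real.sqrt_le_sqrt hc
  have h2 : Real.sqrt (a + b) < Real.sqrt a + Real.sqrt b := by
    rw [show Real.sqrt a + Real.sqrt b = Real.sqrt ((Real.sqrt a + Real.sqrt b)^2) by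
      rw [Real.sqrt_sq (by positivity)]]
    apply Real.sqrt_lt_sqrt (by linarith)
    have h3 := Real.sq_sqrt ha.le
    have h4 := Real.sq_sqrt hb.le
    have h5 : 0 < Real.sqrt a := Real.sqrt_pos.mpr ha
    have h6 : 0 < Real.sqrt b := Real.sqrt_pos.mpr hb
    nlinarith
  linarith

/-! ### the invariant fiber metric on `H × ℕ` -/

section RhoM

variable {H : Type*} [Group H] [TopologicalSpace H] [IsTopologicalGroup H]

variable (V : ℕ → Set H)

def rhoM : (H × ℕ) → (H × ℕ) → ℝ := fun p q =>
  if p.2 = q.2 then Real.sqrt (Dd V p.1 q.1) else 1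

variable {V} {U : Set H} (hV : VNice V U)
include hV

theorem rhoM_symm (p q : H × ℕ) : rhoM V p q = rhoM V q p := by
  unfold rhoM
  by_cases h : p.2 = q.2
  · rw [if_pos h, if_pos h.symm, hV.Dd_symm]
  · rw [if_neg h, if_neg (fun hh => h hh.symm)]

theorem rhoM_self (p : H × ℕ) : rhoM V p p = 0 := by
  unfold rhoM
  rw [if_pos rfl, hV.Dd_self, Real.sqrt_zero]

theorem rhoM_nonneg (p q : H × ℕ) : 0 ≤ rhoM V p q := by
  unfold rhoM
  split_ifs
  · exact Real.sqrt_nonneg _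
  · norm_num

theorem rhoM_le_one (p q : H × ℕ) : rhoM V p q ≤ 1 := by
  unfold rhoM
  split_ifs
  · rw [show (1:ℝ) = Real.sqrt 1 by simp]
    exact Real.sqrt_le_sqrt (hV.Dd_le_one _ _)
  · exact le_refl 1

theorem rhoM_tri (p q r : H × ℕ) : rhoM V p r ≤ rhoM V p q + rhoM V q r := by
  have hnn := rhoM_nonneg hV
  unfold rhoM
  by_cases hpr : p.2 = r.2
  · rw [if_pos hpr]
    by_cases hpq : p.2 = q.2
    · have hqr : q.2 = r.2 := by omega
      rw [if_pos hpq, if_pos hqr]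
      exact sqrt_tri (hV.Dd_nonneg _ _) (hV.Dd_nonneg _ _) (hV.Dd_triangle _ _ _)
    · have hqr : ¬ q.2 = r.2 := by omega
      rw [if_neg hpq, if_neg hqr]
      have h1 : Real.sqrt (Dd V p.1 r.1) ≤ 1 := by
        rw [show (1:ℝ) = Real.sqrt 1 by simp]
        exact Real.sqrt_le_sqrt (hV.Dd_le_one _ _)
      linarith
  · rw [if_neg hpr]
    by_cases hpq : p.2 = q.2
    · have hqr : ¬ q.2 = r.2 := by omega
      rw [if_pos hpq, if_neg hqr]
      have := Real.sqrt_nonneg (Dd V p.1 q.1)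
      linarith
    · rw [if_neg hpq]
      have h2 : 0 ≤ rhoM V q r := hnn q r
      unfold rhoM at h2
      linarith

theorem rhoM_inv (h : H) (p q : H × ℕ) :
    rhoM V (p.1 * h, p.2) (q.1 * h, q.2) = rhoM V p q := by
  unfold rhoM
  by_cases hf : p.2 = q.2
  · simp only [if_pos hf]
    rw [VNice.Dd_right_invariant]
  · simp only [if_neg hf]

end RhoM

end

end HilbUsp


/-- If every homomorphism from `G` into `Homeo([0,1]^ℕ)` with the compact-open
topology is continuous, then every homomorphism from `G` into a separable
topological group is continuous. -/
theorem continuity_into_hilbert_cube_homeos_suffices (G : Type*) [Group G]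
    [TopologicalSpace G] [IsTopologicalGroup G]
    (hG : ∀ π : G →* ((ℕ → unitInterval) ≃ₜ (ℕ → unitInterval)),
      @Continuous _ _ _ hilbertCubeHomeoTop π)
    (H : Type*) [Group H] [TopologicalSpace H] [IsTopologicalGroup H]
    [TopologicalSpace.SeparableSpace H] (π : G →* H) :
    Continuous π := by
  classical
  refine continuous_of_continuousAt_one π ?_
  have key : ∀ U : Set H, IsOpen U → (1:H) ∈ U → π ⁻¹' U ∈ nhds (1:G) := by
    intro U hUopen hU1
    obtain ⟨V, hV0, hV1m, hVsym, hVopen, hVcube, hVsub⟩ :=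
      HilbUsp.exists_Vseq (hUopen.mem_nhds hU1)
    have hV : HilbUsp.VNice V U := ⟨hV0, hV1m, hVsym, hVopen, hVcube, hVsub⟩
    -- the quotient representatives
    let sd : Setoid H := ⟨fun x y => HilbUsp.Dd V x y = 0,
      ⟨fun x => hV.Dd_self x,
       fun {x y} h => by rw [hV.Dd_symm] at h; exact h,
       fun {x y z} h1 h2 => le_antisymm
         (by have := hV.Dd_triangle x y z; linarith) (hV.Dd_nonneg x z)⟩⟩
    let den : ℕ → H := TopologicalSpace.denseSeq H
    let e : ℕ → H := fun n => (Quotient.mk sd (den n)).out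
    let Sset : Set H := Set.range e
    haveI hcnt : Countable ↥Sset := (Set.countable_range e).to_subtype
    haveI : Nonempty ↥Sset := ⟨⟨e 0, ⟨0, rfl⟩⟩⟩
    haveI : Encodable (↥Sset × ℕ) := Encodable.ofCountable _
    haveI : Infinite (↥Sset × ℕ) := Prod.infinite_of_right
    haveI : Denumerable (↥Sset × ℕ) := Denumerable.ofEncodableOfInfinite _
    let E : (↥Sset × ℕ) ≃ ℕ := Denumerable.eqv _
    let pfun : ℕ → H × ℕ := fun n => (((E.symm n).1 : H), (E.symm n).2)
    let ρ : (H × ℕ) → (H × ℕ) → ℝ := HilbUsp.rhoM V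
    -- representative facts
    have he_rel : ∀ i, HilbUsp.Dd V (den i) (e i) = 0 := by
      intro i
      have h1 : Quotient.mk sd ((Quotient.mk sd (den i)).out) = Quotient.mk sd (den i) :=
        Quotient.out_eq _
      have h2 : HilbUsp.Dd V (e i) (den i) = 0 := Quotient.exact h1
      rw [hV.Dd_symm]
      exact h2
    have he_inj : ∀ a b : H, a ∈ Sset → b ∈ Sset → a ≠ b → 0 < HilbUsp.Dd V a b := by
      rintro a b ⟨i, rfl⟩ ⟨j, rfl⟩ hne
      rcases lt_or_eq_of_le (hV.Dd_nonneg (e i) (e j)) with h | h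
      · exact h
      · exfalso
        have hq : Quotient.mk sd (e i) = Quotient.mk sd (e j) := Quotient.sound h.symm
        have h1 : Quotient.mk sd (e i) = Quotient.mk sd (den i) := Quotient.out_eq _
        have h2 : Quotient.mk sd (e j) = Quotient.mk sd (den j) := Quotient.out_eq _
        have : e i = e j := by
          show (Quotient.mk sd (den i)).out = (Quotient.mk sd (den j)).out
          rw [← h1, ← h2, hq]
        exact hne this
    -- density
    have hDdense : ∀ x : H, ∀ ε > (0:ℝ), ∃ a ∈ Sset, HilbUsp.Dd V x a < ε := by
      intro x ε hε
      obtain ⟨k, hk⟩ := exists_pow_lt_of_lt_one hε (show (1:ℝ)/2 < 1 by norm_num)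
      have hOopen : IsOpen {y : H | x * y⁻¹ ∈ V k} :=
        (hV.isOpen k).preimage (by continuity)
      have hOx : x ∈ {y : H | x * y⁻¹ ∈ V k} := by
        simp only [Set.mem_setOf_eq, mul_inv_cancel]
        exact hV.one_mem k
      obtain ⟨i, hi⟩ := (TopologicalSpace.denseRange_denseSeq H).exists_mem_open
        hOopen ⟨x, hOx⟩
      refine ⟨e i, ⟨i, rfl⟩, ?_⟩
      have h1 : HilbUsp.Dd V x (den i) ≤ HilbUsp.wt k := hV.Dd_close hi
      have h2 := hV.Dd_triangle x (den i) (e i)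
      rw [he_rel i] at h2
      calc HilbUsp.Dd V x (e i) ≤ HilbUsp.Dd V x (den i) + 0 := h2
        _ ≤ HilbUsp.wt k := by linarith
        _ < ε := hk
    have hdense : ∀ z : H × ℕ, ∀ ε > (0:ℝ), ∃ n, ρ z (pfun n) < ε := by
      rintro ⟨x, s⟩ ε hε
      have hε2 : (0:ℝ) < ε^2 := by positivity
      obtain ⟨a, haS, ha⟩ := hDdense x (ε^2) hε2
      refine ⟨E (⟨a, haS⟩, s), ?_⟩
      have hps : pfun (E (⟨a, haS⟩, s)) = (a, s) := by
        show (((E.symm (E (⟨a, haS⟩, s))).1 : H), (E.symm (E (⟨a, haS⟩, s))).2) = (a, s)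
        rw [Equiv.symm_apply_apply]
      rw [hps]
      show (if s = s then Real.sqrt (HilbUsp.Dd V x a) else 1) < ε
      rw [if_pos rfl]
      have : Real.sqrt (HilbUsp.Dd V x a) < Real.sqrt (ε^2) :=
        Real.sqrt_lt_sqrt (hV.Dd_nonneg _ _) ha
      rwa [Real.sqrt_sq hε.le] at this
    have hρ : HilbUsp.GoodRho ρ pfun :=
      ⟨HilbUsp.rhoM_symm hV, HilbUsp.rhoM_self hV, HilbUsp.rhoM_tri hV,
        HilbUsp.rhoM_le_one hV, hdense⟩
    -- injectivity of the point sequence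
    have hinj : Function.Injective pfun := by
      intro i j hij
      have h1 := congrArg Prod.fst hij
      have h2 := congrArg Prod.snd hij
      have h3 : E.symm i = E.symm j := Prod.ext (Subtype.ext h1) h2
      exact E.symm.injective h3
    have hsamefiber_pos : ∀ i j : ℕ, i ≠ j → (pfun i).2 = (pfun j).2 →
        0 < HilbUsp.Dd V (pfun i).1 (pfun j).1 := by
      intro i j hij hf
      refine he_inj _ _ (E.symm i).1.2 (E.symm j).1.2 ?_
      intro hc
      exact hij (hinj (Prod.ext hc hf))
    have hρpos : ∀ i j : ℕ, i ≠ j → 0 < ρ (pfun i) (pfun j) := by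
      intro i j hij
      show 0 < (if (pfun i).2 = (pfun j).2 then
        Real.sqrt (HilbUsp.Dd V (pfun i).1 (pfun j).1) else 1)
      split_ifs with hf
      · exact Real.sqrt_pos.mpr (hsamefiber_pos i j hij hf)
      · norm_num
    have hd : HilbUsp.GoodD (HilbUsp.ddist ρ pfun) := by
      refine ⟨fun i j => hρ.symm _ _, fun i => hρ.self _, fun i j k => hρ.tri _ _ _,
        fun i j hij => hρpos i j hij, ?_⟩
      intro i j k hij hik hjk
      show 0 < ρ (pfun i) (pfun j) + ρ (pfun i) (pfun k) - ρ (pfun j) (pfun k)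
      by_cases hfij : (pfun i).2 = (pfun j).2
      · by_cases hfik : (pfun i).2 = (pfun k).2
        · -- all in the same fiber
          have hfjk : (pfun j).2 = (pfun k).2 := by omega
          have e1 : ρ (pfun i) (pfun j) = Real.sqrt (HilbUsp.Dd V (pfun i).1 (pfun j).1) := by
            show (if _ then _ else _) = _; rw [if_pos hfij]
          have e2 : ρ (pfun i) (pfun k) = Real.sqrt (HilbUsp.Dd V (pfun i).1 (pfun k).1) := by
            show (if _ then _ else _) = _; rw [if_pos hfik]
          have e3 : ρ (pfun j) (pfun k) = Real.sqrt (HilbUsp.Dd V (pfun j).1 (pfun k).1) := by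
            show (if _ then _ else _) = _; rw [if_pos hfjk]
          rw [e1, e2, e3]
          have ha := hsamefiber_pos i j hij hfij
          have hb := hsamefiber_pos i k hik hfik
          have hc : HilbUsp.Dd V (pfun j).1 (pfun k).1 ≤
              HilbUsp.Dd V (pfun i).1 (pfun j).1 + HilbUsp.Dd V (pfun i).1 (pfun k).1 := by
            have := hV.Dd_triangle (pfun j).1 (pfun i).1 (pfun k).1
            have := hV.Dd_symm (pfun j).1 (pfun i).1
            linarith
          linarith [HilbUsp.sqrt_strict ha hb hc]
        · have hfjk : ¬ (pfun j).2 = (pfun k).2 := by omega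
          have e2 : ρ (pfun i) (pfun k) = 1 := by
            show (if _ then _ else _) = _; rw [if_neg hfik]
          have e3 : ρ (pfun j) (pfun k) = 1 := by
            show (if _ then _ else _) = _; rw [if_neg hfjk]
          rw [e2, e3]
          have := hρpos i j hij
          linarith
      · by_cases hfik : (pfun i).2 = (pfun k).2
        · have hfjk : ¬ (pfun j).2 = (pfun k).2 := by omega
          have e1 : ρ (pfun i) (pfun j) = 1 := by
            show (if _ then _ else _) = _; rw [if_neg hfij]
          have e3 : ρ (pfun j) (pfun k) = 1 := by
            show (if _ then _ else _) = _; rw [if_neg hfjk]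
          rw [e1, e3]
          have := hρpos i k hik
          linarith
        · have e1 : ρ (pfun i) (pfun j) = 1 := by
            show (if _ then _ else _) = _; rw [if_neg hfij]
          have e2 : ρ (pfun i) (pfun k) = 1 := by
            show (if _ then _ else _) = _; rw [if_neg hfik]
          rw [e1, e2]
          have := hρ.le_one (pfun j) (pfun k)
          linarith
    -- the homeomorphism with the Lipschitz body
    let Θ := HilbUsp.thetaHomeo hd
    -- the action
    let tr : H → (H × ℕ) → (H × ℕ) := fun h z => (z.1 * h, z.2)
    have htr : ∀ h : H, ∀ z w, ρ (tr h z) (tr h w) = ρ z w :=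
      fun h z w => HilbUsp.rhoM_inv hV h z w
    let β : H → ↥(HilbUsp.Kset (HilbUsp.ddist ρ pfun)) →
        ↥(HilbUsp.Kset (HilbUsp.ddist ρ pfun)) :=
      fun h => HilbUsp.act ρ pfun hρ (tr h) (htr h)
    have hβcomp : ∀ h k x, β h (β k x) = β (h * k) x := by
      intro h k x
      show HilbUsp.act ρ pfun hρ (tr h) (htr h) (HilbUsp.act ρ pfun hρ (tr k) (htr k) x) =
        HilbUsp.act ρ pfun hρ (tr (h * k)) (htr (h * k)) x
      have h2 : ∀ z, tr k (tr h z) = tr (h * k) z := by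
        intro z
        show (z.1 * h * k, z.2) = (z.1 * (h * k), z.2)
        rw [mul_assoc]
      rw [HilbUsp.act_comp (ρ := ρ) (p := pfun) hρ (tr h) (tr k) (htr h) (htr k) x]
      exact HilbUsp.act_congr hρ _ _ _ (htr (h*k)) h2 x
    have hβid : ∀ x, β 1 x = x := by
      intro x
      refine HilbUsp.act_id hρ (tr 1) (htr 1) (fun z => ?_) x
      show (z.1 * 1, z.2) = z
      rw [mul_one]
    let βH : H → (↥(HilbUsp.Kset (HilbUsp.ddist ρ pfun)) ≃ₜ
        ↥(HilbUsp.Kset (HilbUsp.ddist ρ pfun))) := fun h =>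
      ⟨⟨β h, β h⁻¹,
        fun x => by rw [hβcomp, inv_mul_cancel, hβid],
        fun x => by rw [hβcomp, mul_inv_cancel, hβid]⟩,
        HilbUsp.act_continuous hρ (tr h) (htr h),
        HilbUsp.act_continuous hρ (tr h⁻¹) (htr h⁻¹)⟩
    let Φfun : H → ((ℕ → unitInterval) ≃ₜ (ℕ → unitInterval)) := fun h =>
      (Θ.trans (βH h)).trans Θ.symm
    have hΦmul : ∀ h k, Φfun (h * k) = Φfun h * Φfun k := by
      intro h k
      show Φfun (h * k) = (Φfun k).trans (Φfun h)
      apply Homeomorph.ext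
      intro x
      show Θ.symm (β (h * k) (Θ x)) = Θ.symm (β h (Θ (Θ.symm (β k (Θ x)))))
      rw [Homeomorph.apply_symm_apply, hβcomp]
    let Φ : H →* ((ℕ → unitInterval) ≃ₜ (ℕ → unitInterval)) := MonoidHom.mk' Φfun hΦmul
    -- separation data
    let z₀ : H × ℕ := ((1:H), (0:ℕ))
    obtain ⟨i₀, hi₀⟩ := hdense z₀ (1/4) (by norm_num)
    -- the witness Lipschitz function
    have hFlip : ∀ w : H × ℕ, ∀ z z' : H × ℕ, |ρ z w - ρ z' w| ≤ ρ z z' := by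
      intro w z z'
      rw [abs_le]
      constructor
      · have t1 := hρ.tri z' z w
        have t2 := hρ.symm z z'
        linarith
      · linarith [hρ.tri z z' w]
    have hgKmem : ∀ j, ρ (pfun j) z₀ ∈ unitInterval :=
      fun j => ⟨hρ.nonneg _ _, hρ.le_one _ _⟩
    let gK : ↥(HilbUsp.Kset (HilbUsp.ddist ρ pfun)) :=
      ⟨fun j => ⟨ρ (pfun j) z₀, hgKmem j⟩, by
        intro i j
        show |ρ (pfun i) z₀ - ρ (pfun j) z₀| ≤ ρ (pfun i) (pfun j)
        exact hFlip z₀ (pfun i) (pfun j)⟩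
    have hact_val : ∀ h : H, (((β h gK).1 i₀ : unitInterval) : ℝ) = ρ (tr h (pfun i₀)) z₀ := by
      intro h
      have h1 : (((β h gK).1 i₀ : unitInterval) : ℝ) =
          HilbUsp.Ext ρ pfun (fun j => ((gK.1 j : unitInterval) : ℝ)) (tr h (pfun i₀)) := rfl
      rw [h1]
      exact HilbUsp.Ext_eq_of_lip hρ (fun z => ρ z z₀) (fun z w => hFlip z₀ z w) _
    have hsep : ∀ h : H, h ∉ U →
        (1:ℝ)/4 ≤ |(((β h gK).1 i₀ : unitInterval) : ℝ) - ((gK.1 i₀ : unitInterval) : ℝ)| := by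
      intro h hh
      have hfib : (pfun i₀).2 = 0 ∧ Real.sqrt (HilbUsp.Dd V (1:H) (pfun i₀).1) < 1/4 := by
        have h1 : (if z₀.2 = (pfun i₀).2 then
            Real.sqrt (HilbUsp.Dd V z₀.1 (pfun i₀).1) else 1) < 1/4 := hi₀
        by_cases hf : z₀.2 = (pfun i₀).2
        · rw [if_pos hf] at h1
          exact ⟨hf.symm, h1⟩
        · rw [if_neg hf] at h1
          norm_num at h1
      obtain ⟨hf0, hlt⟩ := hfib
      have hB : ((gK.1 i₀ : unitInterval) : ℝ) = Real.sqrt (HilbUsp.Dd V (pfun i₀).1 1) := by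
        show (if (pfun i₀).2 = z₀.2 then
          Real.sqrt (HilbUsp.Dd V (pfun i₀).1 z₀.1) else 1) = _
        rw [if_pos hf0]
      have hA : (((β h gK).1 i₀ : unitInterval) : ℝ) =
          Real.sqrt (HilbUsp.Dd V ((pfun i₀).1 * h) 1) := by
        rw [hact_val h]
        show (if (pfun i₀).2 = z₀.2 then
          Real.sqrt (HilbUsp.Dd V ((pfun i₀).1 * h) z₀.1) else 1) = _
        rw [if_pos hf0]
      have hDa : HilbUsp.Dd V (pfun i₀).1 1 < 1/16 := by
        rw [hV.Dd_symm] at hlt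
        have h2 := Real.sq_sqrt (hV.Dd_nonneg (pfun i₀).1 1)
        nlinarith [Real.sqrt_nonneg (HilbUsp.Dd V (pfun i₀).1 1)]
      have hDh : HilbUsp.wt 1 ≤ HilbUsp.Dd V 1 h := hV.Dd_lower hh
      have hwt1 : HilbUsp.wt 1 = 1/2 := by norm_num [HilbUsp.wt]
      have hlow : (7:ℝ)/16 ≤ HilbUsp.Dd V ((pfun i₀).1 * h) 1 := by
        have t1 : HilbUsp.Dd V h 1 ≤
            HilbUsp.Dd V h ((pfun i₀).1 * h) + HilbUsp.Dd V ((pfun i₀).1 * h) 1 :=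
          hV.Dd_triangle _ _ _
        have t2 : HilbUsp.Dd V h ((pfun i₀).1 * h) = HilbUsp.Dd V 1 (pfun i₀).1 := by
          have t5 := HilbUsp.VNice.Dd_right_invariant (V := V) 1 (pfun i₀).1 h
          rw [one_mul] at t5
          exact t5
        have t3 : HilbUsp.Dd V h 1 = HilbUsp.Dd V 1 h := hV.Dd_symm h 1
        have t4 : HilbUsp.Dd V 1 (pfun i₀).1 = HilbUsp.Dd V (pfun i₀).1 1 :=
          hV.Dd_symm 1 (pfun i₀).1
        linarith
      have hge : (1:ℝ)/2 ≤ Real.sqrt (HilbUsp.Dd V ((pfun i₀).1 * h) 1) := by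
        have h5 : Real.sqrt ((1:ℝ)/4) ≤ Real.sqrt (HilbUsp.Dd V ((pfun i₀).1 * h) 1) :=
          Real.sqrt_le_sqrt (by linarith)
        rwa [show (1/4:ℝ) = (1/2)^2 by norm_num, Real.sqrt_sq (by norm_num)] at h5
      have hBlt : ((gK.1 i₀ : unitInterval) : ℝ) < 1/4 := by
        rw [hB]
        rw [hV.Dd_symm] at hlt
        exact hlt
      rw [hA]
      calc (1:ℝ)/4 ≤ Real.sqrt (HilbUsp.Dd V ((pfun i₀).1 * h) 1) -
          ((gK.1 i₀ : unitInterval) : ℝ) := by linarith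
      _ ≤ |Real.sqrt (HilbUsp.Dd V ((pfun i₀).1 * h) 1) -
          ((gK.1 i₀ : unitInterval) : ℝ)| := le_abs_self _
    -- transfer to the cube
    let R : (ℕ → unitInterval) → ℝ := fun x => (((Θ x).1 i₀ : unitInterval) : ℝ)
    have hRcont : Continuous R := by
      refine continuous_subtype_val.comp ?_
      exact (continuous_apply i₀).comp (continuous_subtype_val.comp Θ.continuous)
    have hRu : UniformContinuous R := CompactSpace.uniformContinuous_of_continuous hRcont
    have hEQ : (fun q : (ℕ → unitInterval) × (ℕ → unitInterval) => (R q.1, R q.2)) ⁻¹'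
        {q : ℝ × ℝ | dist q.1 q.2 < 1/4} ∈ uniformity (ℕ → unitInterval) :=
      hRu (Metric.dist_mem_uniformity (by norm_num))
    have hVC : {fg : C(ℕ → unitInterval, ℕ → unitInterval) ×
        C(ℕ → unitInterval, ℕ → unitInterval) | ∀ x,
        (fg.1 x, fg.2 x) ∈ (fun q : (ℕ → unitInterval) × (ℕ → unitInterval) =>
          (R q.1, R q.2)) ⁻¹' {q : ℝ × ℝ | dist q.1 q.2 < 1/4}} ∈
        uniformity C(ℕ → unitInterval, ℕ → unitInterval) :=
      ContinuousMap.hasBasis_compactConvergenceUniformity_of_compact.mem_of_mem hEQ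
    let coeH : ((ℕ → unitInterval) ≃ₜ (ℕ → unitInterval)) →
        C(ℕ → unitInterval, ℕ → unitInterval) := fun g => (g : C(_, _))
    have hOnhds : {F : C(ℕ → unitInterval, ℕ → unitInterval) | ∀ x,
        dist (R x) (R (F x)) < 1/4} ∈ nhds (coeH 1) := by
      rw [UniformSpace.mem_nhds_iff]
      refine ⟨_, hVC, ?_⟩
      intro g hg x
      exact hg x
    let ψ : G →* ((ℕ → unitInterval) ≃ₜ (ℕ → unitInterval)) := Φ.comp π
    have hψ : @Continuous _ _ _ hilbertCubeHomeoTop ψ := hG ψ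
    have htend : Filter.Tendsto ψ (nhds (1:G)) (@nhds _ hilbertCubeHomeoTop (ψ 1)) :=
      @Continuous.tendsto _ _ _ hilbertCubeHomeoTop _ hψ 1
    have hWnhds : coeH ⁻¹' {F : C(ℕ → unitInterval, ℕ → unitInterval) | ∀ x,
        dist (R x) (R (F x)) < 1/4} ∈ @nhds _ hilbertCubeHomeoTop (ψ 1) := by
      have hψ1 : ψ (1:G) = 1 := map_one ψ
      rw [hψ1]
      have heq : hilbertCubeHomeoTop =
          TopologicalSpace.induced coeH ContinuousMap.compactOpen := rfl
      rw [heq, nhds_induced]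
      exact Filter.preimage_mem_comap hOnhds
    have hin : ψ ⁻¹' (coeH ⁻¹' {F : C(ℕ → unitInterval, ℕ → unitInterval) | ∀ x,
        dist (R x) (R (F x)) < 1/4}) ∈ nhds (1:G) :=
      Filter.mem_map.mp (htend hWnhds)
    refine Filter.mem_of_superset hin ?_
    intro aG ha
    by_contra hnotU
    have hsep' := hsep (π aG) hnotU
    have hEQat : dist (R (Θ.symm gK)) (R ((ψ aG) (Θ.symm gK))) < 1/4 := ha (Θ.symm gK)
    have h1 : R (Θ.symm gK) = ((gK.1 i₀ : unitInterval) : ℝ) := by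
      show (((Θ (Θ.symm gK)).1 i₀ : unitInterval) : ℝ) = _
      rw [Homeomorph.apply_symm_apply]
    have h2 : (ψ aG) (Θ.symm gK) = Θ.symm (β (π aG) gK) := by
      show Θ.symm (β (π aG) (Θ (Θ.symm gK))) = _
      rw [Homeomorph.apply_symm_apply]
    have h3 : R ((ψ aG) (Θ.symm gK)) = (((β (π aG) gK).1 i₀ : unitInterval) : ℝ) := by
      rw [h2]
      show (((Θ (Θ.symm _)).1 i₀ : unitInterval) : ℝ) = _
      rw [Homeomorph.apply_symm_apply]
    rw [Real.dist_eq, h1, h3, abs_sub_comm] at hEQat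
    linarith
  rw [ContinuousAt, map_one]
  intro s hs
  obtain ⟨U, hUsub, hUopen, hU1⟩ := mem_nhds_iff.mp hs
  rw [Filter.mem_map]
  exact Filter.mem_of_superset (key U hUopen hU1) (fun a ha => hUsub ha)
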